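/- For $0<q<1$, nonnegative integers $M$, $N$, parameters $0<a,b<1$, and $0 \le n \le N$, the $q$-Hahn polynomial $\check{P}_n(x;N,a,b) = {}_3\phi_2(q^{-n}, abq^{n-1}, q^{-x}; a, q^{-N}; q; q)$ satisfies $\sum_{j=0}^M (-1)^j \genfrac{[}{]}{0pt}{}{M}{j}_q q^{\frac{1}{2}j(j+1)+Nj} (q^{x+1+j};q)_{M-j} (q^{x-N};q)_j\, \check{P}_n(x+j; N, a, b) = (q^{N+1};q)_M\, \check{P}_n(x+M; N+M, a, b)$, as an identity of Laurent polynomials in $z=q^x$. -/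

import Mathlib

/-- q-Pochhammer symbol `(a;q)_n`. -/
noncomputable def qpoch (a q : ℝ) (n : ℕ) : ℝ := ∏ j ∈ Finset.range n, (1 - a * q ^ j)

/-- `(q;q)_n`. -/
noncomputable def qfac (q : ℝ) (n : ℕ) : ℝ := qpoch q q n

/-- Gaussian binomial coefficient. -/
noncomputable def qbinom (q : ℝ) (M j : ℕ) : ℝ := qfac q M / (qfac q j * qfac q (M - j))

/-- q-Hahn polynomial `P_n(x;N,a,b) = ₃φ₂(q^{-n}, abq^{n-1}, q^{-x}; a, q^{-N}; q; q)`,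
written as a function of the Laurent variable `z = q^x`. -/
noncomputable def qHahn (q a b : ℝ) (N n : ℕ) (z : ℝ) : ℝ :=
  ∑ k ∈ Finset.range (n + 1),
    qpoch (q⁻¹ ^ n) q k * qpoch (a * b * q ^ n * q⁻¹) q k * qpoch z⁻¹ q k /
      (qpoch a q k * qpoch (q⁻¹ ^ N) q k * qfac q k) * q ^ k

lemma qpoch_zero (a q : ℝ) : qpoch a q 0 = 1 := by simp [qpoch]

lemma qpoch_succ (a q : ℝ) (n : ℕ) : qpoch a q (n+1) = qpoch a q n * (1 - a * q ^ n) :=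
  Finset.prod_range_succ _ _

lemma qpoch_succ' (a q : ℝ) (n : ℕ) : qpoch a q (n+1) = (1 - a) * qpoch (a*q) q n := by
  unfold qpoch
  rw [Finset.prod_range_succ']
  simp only [pow_zero, mul_one]
  rw [mul_comm]
  congr 1
  refine Finset.prod_congr rfl fun j _ => ?_
  ring

lemma qpoch_pos (a q : ℝ) (ha0 : 0 ≤ a) (ha1 : a < 1) (hq0 : 0 ≤ q) (hq1 : q ≤ 1) (n : ℕ) :
    0 < qpoch a q n := by
  refine Finset.prod_pos fun j _ => ?_
  have h1 : q ^ j ≤ 1 := pow_le_one₀ hq0 hq1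
  have h2 : 0 ≤ q ^ j := pow_nonneg hq0 j
  nlinarith

lemma qfac_ne_zero (q : ℝ) (hq0 : 0 < q) (hq1 : q < 1) (n : ℕ) : qfac q n ≠ 0 :=
  ne_of_gt (qpoch_pos q q hq0.le hq1 hq0.le hq1.le n)

lemma qfac_succ (q : ℝ) (n : ℕ) : qfac q (n+1) = qfac q n * (1 - q ^ (n+1)) := by
  rw [qfac, qpoch_succ, ← pow_succ']
  rfl

lemma one_sub_pow_ne (q : ℝ) (hq0 : 0 < q) (hq1 : q < 1) (n : ℕ) : 1 - q ^ (n+1) ≠ 0 := by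
  have : q ^ (n+1) < 1 := pow_lt_one₀ hq0.le hq1 (Nat.succ_ne_zero n)
  linarith

lemma qpoch_inv_ne_zero (q : ℝ) (hq0 : 0 < q) (hq1 : q < 1) (N k : ℕ) (h : k ≤ N) :
    qpoch (q⁻¹ ^ N) q k ≠ 0 := by
  rw [qpoch]
  refine Finset.prod_ne_zero_iff.mpr fun j hj => ?_
  have hjN : j < N := lt_of_lt_of_le (Finset.mem_range.mp hj) h
  have hque : q ^ j ≠ q ^ N := by
    have := pow_lt_pow_right_of_lt_one₀ hq0 hq1 hjN
    linarith
  have hqN : q ^ N ≠ 0 := pow_ne_zero _ (ne_of_gt hq0)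
  intro hcon
  apply hque
  have : q⁻¹ ^ N * q ^ j = 1 := by linarith
  rw [inv_pow] at this
  field_simp at this
  linarith [this]

lemma one_sub_invpow_mul_ne (q : ℝ) (hq0 : 0 < q) (hq1 : q < 1) (N m : ℕ) (h : m < N) :
    1 - q⁻¹ ^ N * q ^ m ≠ 0 := by
  have hque : q ^ m ≠ q ^ N := by
    have := pow_lt_pow_right_of_lt_one₀ hq0 hq1 h
    linarith
  intro hcon
  apply hque
  have : q⁻¹ ^ N * q ^ m = 1 := by linarith
  rw [inv_pow] at this
  have hqN : q ^ N ≠ 0 := pow_ne_zero _ (ne_of_gt hq0)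
  field_simp at this
  linarith

lemma one_sub_invpow_ne (q : ℝ) (hq0 : 0 < q) (hq1 : q < 1) (N : ℕ) :
    1 - q⁻¹ ^ (N+1) ≠ 0 := by
  have h1 : 1 < q⁻¹ := (one_lt_inv₀ hq0).mpr hq1
  have : 1 < q⁻¹ ^ (N+1) := one_lt_pow₀ h1 (Nat.succ_ne_zero N)
  linarith

lemma qbinom_zero (q : ℝ) (hq0 : 0 < q) (hq1 : q < 1) (M : ℕ) : qbinom q M 0 = 1 := by
  rw [qbinom]
  simp [qfac, qpoch_zero]
  exact qfac_ne_zero q hq0 hq1 M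

lemma qbinom_self (q : ℝ) (hq0 : 0 < q) (hq1 : q < 1) (M : ℕ) : qbinom q M M = 1 := by
  rw [qbinom]
  simp [qfac, qpoch_zero]
  exact qfac_ne_zero q hq0 hq1 M

lemma qbinom_pascal (q : ℝ) (hq0 : 0 < q) (hq1 : q < 1) (M j : ℕ) (h : j < M) :
    qbinom q (M+1) (j+1) = q ^ (j+1) * qbinom q M (j+1) + qbinom q M j := by
  obtain ⟨d, rfl⟩ : ∃ d, M = j + 1 + d := ⟨M - (j+1), by omega⟩
  rw [qbinom, qbinom, qbinom]
  rw [show j + 1 + d + 1 - (j + 1) = d + 1 by omega,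
      show j + 1 + d - (j + 1) = d by omega,
      show j + 1 + d - j = d + 1 by omega]
  rw [show j + 1 + d + 1 = (j + 1 + d) + 1 by omega, qfac_succ q (j+1+d),
      qfac_succ q j, qfac_succ q d]
  have f1 := qfac_ne_zero q hq0 hq1 j
  have f2 := qfac_ne_zero q hq0 hq1 d
  have f3 := qfac_ne_zero q hq0 hq1 (j+1+d)
  have g1 := one_sub_pow_ne q hq0 hq1 j
  have g2 := one_sub_pow_ne q hq0 hq1 d
  have key : q ^ (j + 1 + d + 1) = q ^ (j+1) * q ^ (d+1) := by rw [← pow_add]; ring_nf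
  field_simp
  rw [key]
  ring

lemma tri (j : ℕ) : (j+1)*(j+2)/2 = j*(j+1)/2 + (j+1) := by
  have h2 : (j+1)*(j+2) = j*(j+1) + 2*(j+1) := by ring
  obtain ⟨t, ht⟩ := Nat.even_mul_succ_self j
  rw [h2, ht]
  omega

noncomputable def lhsTerm (q z : ℝ) (N M : ℕ) (f : ℕ → ℝ) (j : ℕ) : ℝ :=
  (-1)^j * qbinom q M j * q ^ (j*(j+1)/2 + N*j) * qpoch (z * q ^ (1+j)) q (M-j) *
    qpoch (z * q⁻¹ ^ N) q j * f j

lemma key (q z : ℝ) (hq0 : 0 < q) (hq1 : q < 1) (N M : ℕ) (f : ℕ → ℝ) :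
    ∑ j ∈ Finset.range (M+2), lhsTerm q z N (M+1) f j
    = ∑ j ∈ Finset.range (M+1), lhsTerm q (z*q) (N+1) M
        (fun i => (1 - z * q ^ (1+i)) * f i - q ^ (N+1) * (1 - z * q ^ i * q⁻¹ ^ N) * f (i+1)) j := by
  have hq : q ≠ 0 := ne_of_gt hq0
  set U : ℕ → ℝ := fun j => (-1)^j * (q^j * qbinom q M j) * q ^ (j*(j+1)/2 + N*j) *
      qpoch (z * q ^ (1+j)) q ((M+1)-j) * qpoch (z * q⁻¹ ^ N) q j * f j with hU
  set V : ℕ → ℝ := fun j => (-1)^(j+1) * qbinom q M j * q ^ ((j+1)*(j+2)/2 + N*(j+1)) *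
      qpoch (z * q ^ (1+(j+1))) q ((M+1)-(j+1)) * qpoch (z * q⁻¹ ^ N) q (j+1) * f (j+1) with hV
  have hsplit : ∀ j < M, lhsTerm q z N (M+1) f (j+1) = U (j+1) + V j := by
    intro j hj
    simp only [lhsTerm, hU, hV]
    rw [qbinom_pascal q hq0 hq1 M j hj]
    ring
  have h0 : lhsTerm q z N (M+1) f 0 = U 0 := by
    simp only [lhsTerm, hU, qbinom_zero q hq0 hq1, pow_zero, one_mul]
  have hlast : lhsTerm q z N (M+1) f (M+1) = V M := by
    simp only [lhsTerm, hV, qbinom_self q hq0 hq1, Nat.sub_self]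
  have hT : ∀ j ∈ Finset.range (M+1), U j + V j = lhsTerm q (z*q) (N+1) M
      (fun i => (1 - z * q ^ (1+i)) * f i - q ^ (N+1) * (1 - z * q ^ i * q⁻¹ ^ N) * f (i+1)) j := by
    intro j hj
    have hjM : j ≤ M := Nat.lt_succ_iff.mp (Finset.mem_range.mp hj)
    have e1 : q ^ (j*(j+1)/2 + (N+1)*j) = q^j * q ^ (j*(j+1)/2 + N*j) := by
      rw [← pow_add]; congr 1; ring
    have e2 : q ^ ((j+1)*(j+2)/2 + N*(j+1)) = q^(N+1) * q ^ (j*(j+1)/2 + (N+1)*j) := by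
      rw [← pow_add]; congr 1; rw [tri]; ring
    have e3 : qpoch (z * q ^ (1+j)) q ((M+1)-j) =
        (1 - z * q ^ (1+j)) * qpoch (z * q * q ^ (1+j)) q (M-j) := by
      rw [show (M+1)-j = (M-j)+1 by omega, qpoch_succ',
        show z * q ^ (1+j) * q = z * q * q ^ (1+j) by ring]
    have e4 : qpoch (z * q ^ (1+(j+1))) q ((M+1)-(j+1)) = qpoch (z * q * q ^ (1+j)) q (M-j) := by
      rw [show (M+1)-(j+1) = M-j by omega, show z * q ^ (1+(j+1)) = z * q * q ^ (1+j) by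
        rw [show 1+(j+1) = (1+j)+1 by omega, pow_succ]; ring]
    have e5 : qpoch (z * q * q⁻¹ ^ (N+1)) q j = qpoch (z * q⁻¹ ^ N) q j := by
      rw [show z * q * q⁻¹ ^ (N+1) = z * q⁻¹ ^ N by rw [pow_succ]; field_simp]
    have e6 : qpoch (z * q⁻¹ ^ N) q (j+1) =
        qpoch (z * q⁻¹ ^ N) q j * (1 - z * q⁻¹ ^ N * q ^ j) := qpoch_succ _ _ _
    simp only [lhsTerm, hU, hV]
    rw [e1, e2, e3, e4, e5, e6]
    ring
  calc ∑ j ∈ Finset.range (M+2), lhsTerm q z N (M+1) f j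
      = (∑ j ∈ Finset.range (M+1), lhsTerm q z N (M+1) f j) + lhsTerm q z N (M+1) f (M+1) :=
        Finset.sum_range_succ _ _
    _ = ((∑ j ∈ Finset.range M, lhsTerm q z N (M+1) f (j+1)) + lhsTerm q z N (M+1) f 0)
          + lhsTerm q z N (M+1) f (M+1) := by rw [Finset.sum_range_succ']
    _ = ((∑ j ∈ Finset.range M, (U (j+1) + V j)) + U 0) + V M := by
        rw [h0, hlast, Finset.sum_congr rfl fun j hj => hsplit j (Finset.mem_range.mp hj)]
    _ = (((∑ j ∈ Finset.range M, U (j+1)) + U 0) + ((∑ j ∈ Finset.range M, V j) + V M)) := by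
        rw [Finset.sum_add_distrib]; ring
    _ = (∑ j ∈ Finset.range (M+1), U j) + (∑ j ∈ Finset.range (M+1), V j) := by
        rw [Finset.sum_range_succ', Finset.sum_range_succ]
    _ = ∑ j ∈ Finset.range (M+1), (U j + V j) := (Finset.sum_add_distrib).symm
    _ = _ := Finset.sum_congr rfl hT

lemma qHahn_step (q a b z : ℝ) (hq0 : 0 < q) (hq1 : q < 1) (ha0 : 0 < a) (ha1 : a < 1)
    (N n : ℕ) (hn : n ≤ N) (hz : z ≠ 0) :
    (1 - z * q) * qHahn q a b N n z - q ^ (N+1) * (1 - z * q⁻¹ ^ N) * qHahn q a b N n (z * q)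
      = (1 - q ^ (N+1)) * qHahn q a b (N+1) n (z * q) := by
  unfold qHahn
  rw [Finset.mul_sum, Finset.mul_sum, Finset.mul_sum, ← Finset.sum_sub_distrib]
  refine Finset.sum_congr rfl fun k hk => ?_
  have hk' : k ≤ n := Nat.lt_succ_iff.mp (Finset.mem_range.mp hk)
  have hq : q ≠ 0 := ne_of_gt hq0
  match k with
  | 0 =>
    simp only [qpoch_zero, qfac, pow_zero]
    field_simp
    have hX : q ^ N * q⁻¹ ^ N = 1 := by rw [← mul_pow, mul_inv_cancel₀ hq, one_pow]
    linear_combination (z * q) * hX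
  | (m+1) =>
    have hmN : m < N := by omega
    have hqN : (q:ℝ) ^ N ≠ 0 := pow_ne_zero _ (ne_of_gt hq0)
    have hqN1 : (q:ℝ) ^ (N+1) ≠ 0 := pow_ne_zero _ (ne_of_gt hq0)
    have h2 : qpoch (z*q)⁻¹ q (m+1) = (1 - (z*q)⁻¹) * qpoch z⁻¹ q m := by
      rw [qpoch_succ']
      congr 2
      field_simp
    have h4 : qpoch (q⁻¹ ^ (N+1)) q (m+1) = (1 - q⁻¹ ^ (N+1)) * qpoch (q⁻¹ ^ N) q m := by
      rw [qpoch_succ']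
      congr 2
      rw [pow_succ]
      field_simp
    have hFne := qfac_ne_zero q hq0 hq1 (m+1)
    have hPne : qpoch a q (m+1) ≠ 0 :=
      ne_of_gt (qpoch_pos a q ha0.le ha1 hq0.le hq1.le (m+1))
    have hQne : qpoch (q⁻¹ ^ N) q m ≠ 0 := qpoch_inv_ne_zero q hq0 hq1 N m (by omega)
    have hQ1ne : qpoch (q⁻¹ ^ N) q (m+1) ≠ 0 := qpoch_inv_ne_zero q hq0 hq1 N (m+1) (by omega)
    have hQ2ne : qpoch (q⁻¹ ^ (N+1)) q (m+1) ≠ 0 := qpoch_inv_ne_zero q hq0 hq1 (N+1) (m+1) (by omega)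
    have hA : (q:ℝ) ^ N - q ^ m ≠ 0 := by
      have := pow_lt_pow_right_of_lt_one₀ hq0 hq1 hmN
      intro hcon; linarith
    have hB : (q:ℝ) ^ (N+1) - 1 ≠ 0 := by
      have : q ^ (N+1) < 1 := pow_lt_one₀ hq0.le hq1 (Nat.succ_ne_zero N)
      intro hcon; linarith
    have t1 : qpoch (q⁻¹ ^ n) q (m+1) * qpoch (a * b * q ^ n * q⁻¹) q (m+1) * qpoch z⁻¹ q (m+1) /
          (qpoch a q (m+1) * qpoch (q⁻¹ ^ N) q (m+1) * qfac q (m+1)) * q ^ (m+1)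
        = qpoch (q⁻¹ ^ n) q (m+1) * qpoch (a * b * q ^ n * q⁻¹) q (m+1) * qpoch z⁻¹ q m *
            (z - q ^ m) * q ^ N * q ^ (m+1) /
          (z * qpoch a q (m+1) * qpoch (q⁻¹ ^ N) q m * (q ^ N - q ^ m) * qfac q (m+1)) := by
      rw [div_mul_eq_mul_div,
        div_eq_div_iff (mul_ne_zero (mul_ne_zero hPne hQ1ne) hFne)
          (mul_ne_zero (mul_ne_zero (mul_ne_zero (mul_ne_zero hz hPne) hQne) hA) hFne)]
      rw [qpoch_succ z⁻¹ q m, qpoch_succ (q⁻¹ ^ N) q m]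
      simp only [inv_pow]
      field_simp
    have t2 : qpoch (q⁻¹ ^ n) q (m+1) * qpoch (a * b * q ^ n * q⁻¹) q (m+1) * qpoch (z*q)⁻¹ q (m+1) /
          (qpoch a q (m+1) * qpoch (q⁻¹ ^ N) q (m+1) * qfac q (m+1)) * q ^ (m+1)
        = qpoch (q⁻¹ ^ n) q (m+1) * qpoch (a * b * q ^ n * q⁻¹) q (m+1) * qpoch z⁻¹ q m *
            (z * q - 1) * q ^ N * q ^ (m+1) /
          (z * q * qpoch a q (m+1) * qpoch (q⁻¹ ^ N) q m * (q ^ N - q ^ m) * qfac q (m+1)) := by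
      rw [div_mul_eq_mul_div,
        div_eq_div_iff (mul_ne_zero (mul_ne_zero hPne hQ1ne) hFne)
          (mul_ne_zero (mul_ne_zero (mul_ne_zero (mul_ne_zero (mul_ne_zero hz hq) hPne) hQne) hA) hFne)]
      rw [h2, qpoch_succ (q⁻¹ ^ N) q m]
      simp only [inv_pow]
      field_simp
    have t3 : qpoch (q⁻¹ ^ n) q (m+1) * qpoch (a * b * q ^ n * q⁻¹) q (m+1) * qpoch (z*q)⁻¹ q (m+1) /
          (qpoch a q (m+1) * qpoch (q⁻¹ ^ (N+1)) q (m+1) * qfac q (m+1)) * q ^ (m+1)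
        = qpoch (q⁻¹ ^ n) q (m+1) * qpoch (a * b * q ^ n * q⁻¹) q (m+1) * qpoch z⁻¹ q m *
            (z * q - 1) * q ^ (N+1) * q ^ (m+1) /
          (z * q * qpoch a q (m+1) * qpoch (q⁻¹ ^ N) q m * (q ^ (N+1) - 1) * qfac q (m+1)) := by
      rw [div_mul_eq_mul_div,
        div_eq_div_iff (mul_ne_zero (mul_ne_zero hPne hQ2ne) hFne)
          (mul_ne_zero (mul_ne_zero (mul_ne_zero (mul_ne_zero (mul_ne_zero hz hq) hPne) hQne) hB) hFne)]
      rw [h2, h4]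
      simp only [inv_pow]
      field_simp
    have hg : q ^ (N+1) * (1 - z * q⁻¹ ^ N) = q * (q ^ N - z) := by
      rw [inv_pow]; field_simp; ring
    have hDen1 : (z * qpoch a q (m+1) * qpoch (q⁻¹ ^ N) q m * (q ^ N - q ^ m) * qfac q (m+1)) ≠ 0 :=
      mul_ne_zero (mul_ne_zero (mul_ne_zero (mul_ne_zero hz hPne) hQne) hA) hFne
    have hDen2 : (z * q * qpoch a q (m+1) * qpoch (q⁻¹ ^ N) q m * (q ^ N - q ^ m) * qfac q (m+1)) ≠ 0 :=
      mul_ne_zero (mul_ne_zero (mul_ne_zero (mul_ne_zero (mul_ne_zero hz hq) hPne) hQne) hA) hFne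
    have hDen3 : (z * q * qpoch a q (m+1) * qpoch (q⁻¹ ^ N) q m * (q ^ (N+1) - 1) * qfac q (m+1)) ≠ 0 :=
      mul_ne_zero (mul_ne_zero (mul_ne_zero (mul_ne_zero (mul_ne_zero hz hq) hPne) hQne) hB) hFne
    have hD : (z * q * qpoch a q (m+1) * qpoch (q⁻¹ ^ N) q m * (q ^ N - q ^ m) * (q ^ (N+1) - 1) * qfac q (m+1)) ≠ 0 :=
      mul_ne_zero (mul_ne_zero (mul_ne_zero (mul_ne_zero (mul_ne_zero (mul_ne_zero hz hq) hPne) hQne) hA) hB) hFne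
    have u1 : (1 - z * q) * ((qpoch (q⁻¹ ^ n) q (m+1) * qpoch (a * b * q ^ n * q⁻¹) q (m+1) * qpoch z⁻¹ q m *
            (z - q ^ m) * q ^ N * q ^ (m+1)) / (z * qpoch a q (m+1) * qpoch (q⁻¹ ^ N) q m * (q ^ N - q ^ m) * qfac q (m+1)))
        = ((1 - z * q) * (qpoch (q⁻¹ ^ n) q (m+1) * qpoch (a * b * q ^ n * q⁻¹) q (m+1) * qpoch z⁻¹ q m *
            (z - q ^ m) * q ^ N * q ^ (m+1)) * (q * (q ^ (N+1) - 1))) / (z * q * qpoch a q (m+1) * qpoch (q⁻¹ ^ N) q m * (q ^ N - q ^ m) * (q ^ (N+1) - 1) * qfac q (m+1)) := by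
      rw [mul_div_assoc', div_eq_div_iff hDen1 hD]; ring
    have u2 : q * (q ^ N - z) * ((qpoch (q⁻¹ ^ n) q (m+1) * qpoch (a * b * q ^ n * q⁻¹) q (m+1) * qpoch z⁻¹ q m *
            (z * q - 1) * q ^ N * q ^ (m+1)) / (z * q * qpoch a q (m+1) * qpoch (q⁻¹ ^ N) q m * (q ^ N - q ^ m) * qfac q (m+1)))
        = (q * (q ^ N - z) * (qpoch (q⁻¹ ^ n) q (m+1) * qpoch (a * b * q ^ n * q⁻¹) q (m+1) * qpoch z⁻¹ q m *
            (z * q - 1) * q ^ N * q ^ (m+1)) * (q ^ (N+1) - 1)) / (z * q * qpoch a q (m+1) * qpoch (q⁻¹ ^ N) q m * (q ^ N - q ^ m) * (q ^ (N+1) - 1) * qfac q (m+1)) := by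
      rw [mul_div_assoc', div_eq_div_iff hDen2 hD]; ring
    have u3 : (1 - q ^ (N+1)) * ((qpoch (q⁻¹ ^ n) q (m+1) * qpoch (a * b * q ^ n * q⁻¹) q (m+1) * qpoch z⁻¹ q m *
            (z * q - 1) * q ^ (N+1) * q ^ (m+1)) / (z * q * qpoch a q (m+1) * qpoch (q⁻¹ ^ N) q m * (q ^ (N+1) - 1) * qfac q (m+1)))
        = ((1 - q ^ (N+1)) * (qpoch (q⁻¹ ^ n) q (m+1) * qpoch (a * b * q ^ n * q⁻¹) q (m+1) * qpoch z⁻¹ q m *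
            (z * q - 1) * q ^ (N+1) * q ^ (m+1)) * (q ^ N - q ^ m)) / (z * q * qpoch a q (m+1) * qpoch (q⁻¹ ^ N) q m * (q ^ N - q ^ m) * (q ^ (N+1) - 1) * qfac q (m+1)) := by
      rw [mul_div_assoc', div_eq_div_iff hDen3 hD]; ring
    rw [t1, t2, t3, hg, u1, u2, u3, div_sub_div_same]
    congr 1
    ring

theorem qHahn_shape_invariance (q a b : ℝ) (hq0 : 0 < q) (hq1 : q < 1)
    (ha0 : 0 < a) (ha1 : a < 1) (hb0 : 0 < b) (hb1 : b < 1)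
    (M N n : ℕ) (hn : n ≤ N) (z : ℝ) (hz : z ≠ 0) :
    (∑ j ∈ Finset.range (M + 1),
        (-1) ^ j * qbinom q M j * q ^ (j * (j + 1) / 2 + N * j) *
          qpoch (z * q ^ (1 + j)) q (M - j) * qpoch (z * q⁻¹ ^ N) q j *
            qHahn q a b N n (z * q ^ j)) =
      qpoch (q ^ (N + 1)) q M * qHahn q a b (N + M) n (z * q ^ M) := by
  have hq : q ≠ 0 := ne_of_gt hq0
  induction M generalizing N z with
  | zero =>
    rw [Finset.sum_range_one]
    simp [qbinom_zero q hq0 hq1, qpoch_zero]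
  | succ M ih =>
    have hgoal : (∑ j ∈ Finset.range (M + 1 + 1),
        (-1) ^ j * qbinom q (M+1) j * q ^ (j * (j + 1) / 2 + N * j) *
          qpoch (z * q ^ (1 + j)) q (M + 1 - j) * qpoch (z * q⁻¹ ^ N) q j *
            qHahn q a b N n (z * q ^ j))
        = ∑ j ∈ Finset.range (M+2), lhsTerm q z N (M+1)
            (fun i => qHahn q a b N n (z * q ^ i)) j := rfl
    rw [hgoal, key q z hq0 hq1 N M]
    have hstep : ∀ j ∈ Finset.range (M+1),
        lhsTerm q (z*q) (N+1) M
          (fun i => (1 - z * q ^ (1+i)) * qHahn q a b N n (z * q ^ i)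
            - q ^ (N+1) * (1 - z * q ^ i * q⁻¹ ^ N) * qHahn q a b N n (z * q ^ (i+1))) j
        = (1 - q ^ (N+1)) * lhsTerm q (z*q) (N+1) M
            (fun i => qHahn q a b (N+1) n ((z*q) * q ^ i)) j := by
      intro j _
      have hzj : z * q ^ j ≠ 0 := mul_ne_zero hz (pow_ne_zero _ hq)
      have hs := qHahn_step q a b (z * q ^ j) hq0 hq1 ha0 ha1 N n hn hzj
      simp only [lhsTerm]
      rw [show z * q ^ (1+j) = z * q ^ j * q by rw [pow_add]; ring,
        show z * q ^ (j+1) = z * q ^ j * q by rw [pow_succ]; ring,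
        hs,
        show z * q ^ j * q = (z * q) * q ^ j by ring]
      ring
    rw [Finset.sum_congr rfl hstep, ← Finset.mul_sum]
    have hsum : (∑ j ∈ Finset.range (M+1), lhsTerm q (z*q) (N+1) M
        (fun i => qHahn q a b (N+1) n ((z*q) * q ^ i)) j)
        = qpoch (q ^ (N+1+1)) q M * qHahn q a b (N+1+M) n ((z*q) * q ^ M) :=
      ih (N+1) (le_trans hn (Nat.le_succ N)) (z*q) (mul_ne_zero hz hq)
    rw [hsum]
    rw [show qpoch (q ^ (N+1)) q (M+1) = (1 - q ^ (N+1)) * qpoch (q ^ (N+1) * q) q M from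
        qpoch_succ' _ _ _,
      show q ^ (N+1) * q = q ^ (N+1+1) from (pow_succ q (N+1)).symm,
      show N + (M+1) = N+1+M by omega,
      show z * q ^ (M+1) = (z*q) * q ^ M by rw [pow_succ]; ring]
    ring
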